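/- Let V be an n-dimensional real vector space, let ω be a nonzero alternating n-form on V (a volume form), and set k = n − 1 ≥ 1, so that (V, ω) is a multisymplectic vector space of degree k+1 = n. Let W be a linear subspace of V with 1 ≤ dim W = l ≤ n − 1. Then W is Type-I l-Lagrangian, i.e. W = W_I^{⊥,l}; moreover W_I^{⊥,l'} = {0} for all 1 ≤ l' < l. -/

import Mathlib

open Module

/-- Type-I l-th orthogonal complement of `W` with respect to the alternating
`(k+1)`-form `ω`: vectors `v` such that `ω (v, w₁, …, w_l, u₁, …, u_{k-l}) = 0`
for all `w₁, …, w_l ∈ W` (the first `l` entries after `v`) and arbitrary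
remaining entries. -/
def TypeIOrth {V : Type*} [AddCommGroup V] [Module ℝ V] {k : ℕ}
    (ω : V [⋀^Fin (k+1)]→ₗ[ℝ] ℝ) (W : Submodule ℝ V) (l : ℕ) : Set V :=
  {v | ∀ f : Fin k → V, (∀ i : Fin k, (i : ℕ) < l → f i ∈ W) → ω (Fin.cons v f) = 0}

/-- Extend a linearly independent family to a longer one. -/
private lemma extendInd {V : Type*} [AddCommGroup V] [Module ℝ V] [FiniteDimensional ℝ V]
    {m n : ℕ} (hmn : m ≤ n) (hn : n ≤ finrank ℝ V) {g : Fin m → V}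
    (hg : LinearIndependent ℝ g) :
    ∃ b : Fin n → V, LinearIndependent ℝ b ∧ ∀ i : Fin m, b (Fin.castLE hmn i) = g i := by
  induction n, hmn using Nat.le_induction with
  | base => exact ⟨g, hg, fun i => by simp⟩
  | succ n hmn ih =>
    obtain ⟨b, hb, hbg⟩ := ih (le_of_lt (lt_of_lt_of_le (Nat.lt_succ_self n) hn))
    obtain ⟨x, hx⟩ := exists_linearIndependent_snoc_of_lt_finrank hb
      (lt_of_lt_of_le (Nat.lt_succ_self n) hn)
    refine ⟨Fin.snoc b x, hx, fun i => ?_⟩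
    have h1 : Fin.castLE (le_trans hmn (Nat.le_succ n)) i
        = Fin.castSucc (Fin.castLE hmn i) := by ext; simp
    rw [h1, Fin.snoc_castSucc, hbg]

/-- A nonzero top form is nonzero on linearly independent families. -/
private lemma vol_ne_zero {V : Type*} [AddCommGroup V] [Module ℝ V] [FiniteDimensional ℝ V]
    {k : ℕ} (hdim : finrank ℝ V = k + 1)
    (ω : V [⋀^Fin (k+1)]→ₗ[ℝ] ℝ) (hω : ω ≠ 0) {b : Fin (k+1) → V}
    (hb : LinearIndependent ℝ b) : ω b ≠ 0 := by
  have hcard : Fintype.card (Fin (k+1)) = finrank ℝ V := by simp [hdim]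
  let e := basisOfLinearIndependentOfCardEqFinrank hb hcard
  have he : ⇑e = b := coe_basisOfLinearIndependentOfCardEqFinrank hb hcard
  intro h0
  apply hω
  have heq := ω.eq_smul_basis_det e
  have hze : ω ⇑e = 0 := by rw [he]; exact h0
  rw [heq, hze, zero_smul]

private lemma not_mem_typeIOrth {V : Type*} [AddCommGroup V] [Module ℝ V]
    [FiniteDimensional ℝ V] {k : ℕ} (hdim : finrank ℝ V = k + 1)
    (ω : V [⋀^Fin (k+1)]→ₗ[ℝ] ℝ) (hω : ω ≠ 0) (W : Submodule ℝ V) {m : ℕ} (hm : m ≤ k)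
    {v : V} (hv0 : v ≠ 0) (h1 : v ∈ W → m + 1 ≤ finrank ℝ W)
    (h2 : v ∉ W → m ≤ finrank ℝ W) : v ∉ TypeIOrth ω W m := by
  -- first build g : Fin (m+1) → V independent, g 0 = v, tail in W
  have hmk : m + 1 ≤ k + 1 := by omega
  have hg : ∃ g : Fin (m+1) → V, LinearIndependent ℝ g ∧ g 0 = v ∧
      ∀ i : Fin m, g i.succ ∈ W := by
    by_cases hv : v ∈ W
    · -- extend ⟨v, hv⟩ inside W
      have h0 : LinearIndependent ℝ (fun _ : Fin 1 => (⟨v, hv⟩ : W)) := by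
        apply linearIndependent_unique_iff.2
        exact fun h => hv0 (congrArg Subtype.val h)
      obtain ⟨c, hc, hcg⟩ := extendInd (by omega : 1 ≤ m + 1) (h1 hv) h0
      refine ⟨fun i => (c i : V), hc.map' W.subtype W.ker_subtype, ?_, fun i => (c i.succ).2⟩
      simpa using congrArg Subtype.val (hcg 0)
    · -- cons v onto m independent vectors of W
      have h0 : LinearIndependent ℝ (fun x : Fin 0 => (Fin.elim0 x : W)) :=
        linearIndependent_empty_type
      obtain ⟨c, hc, -⟩ := extendInd (Nat.zero_le m) (h2 hv) h0
      refine ⟨Fin.cons v (fun i => (c i : V)), ?_, Fin.cons_zero _ _,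
        fun i => by simpa using (c i).2⟩
      refine linearIndependent_fin_cons.2 ⟨hc.map' W.subtype W.ker_subtype, fun hvs => hv ?_⟩
      have hle : Submodule.span ℝ (Set.range fun i => ((c i : V))) ≤ W := by
        rw [Submodule.span_le]; rintro x ⟨i, rfl⟩; exact (c i).2
      exact hle hvs
  obtain ⟨g, hg, hg0, hgW⟩ := hg
  obtain ⟨b, hb, hbg⟩ := extendInd hmk hdim.ge hg
  have hb0 : b 0 = v := by
    rw [← hg0]; simpa using hbg 0
  intro hmem
  have hfW : ∀ i : Fin k, (i : ℕ) < m → b i.succ ∈ W := by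
    intro i hi
    have hcast : (i.succ : Fin (k+1)) = Fin.castLE hmk ((⟨i, hi⟩ : Fin m)).succ := by
      ext; simp
    rw [hcast, hbg]
    exact hgW _
  have := hmem (fun i => b i.succ) hfW
  have hcons : Fin.cons v (fun i : Fin k => b i.succ) = b := by
    rw [← hb0]; exact Fin.cons_self_tail b
  rw [hcons] at this
  exact vol_ne_zero hdim ω hω hb this

theorem typeIOrth_volume_form
    {V : Type*} [AddCommGroup V] [Module ℝ V] [FiniteDimensional ℝ V]
    {k : ℕ} (hk : 1 ≤ k) (hdim : finrank ℝ V = k + 1)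
    (ω : V [⋀^Fin (k+1)]→ₗ[ℝ] ℝ) (hω : ω ≠ 0)
    (W : Submodule ℝ V) (l : ℕ) (hl : 1 ≤ l) (hlk : l ≤ k)
    (hWl : finrank ℝ W = l) :
    (W : Set V) = TypeIOrth ω W l ∧
      ∀ l', 1 ≤ l' → l' < l → TypeIOrth ω W l' = {0} := by
  constructor
  · ext v
    constructor
    · -- W ⊆ TypeIOrth
      intro hv f hf
      apply ω.map_linearDependent
      intro hind
      -- the first l+1 vectors lie in W, contradiction with finrank W = l
      have hle : l + 1 ≤ k + 1 := by omega
      have hmem : ∀ j : Fin (l+1), (Fin.cons v f : Fin (k+1) → V) (Fin.castLE hle j) ∈ W := by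
        intro j
        induction j using Fin.cases with
        | zero =>
          have : Fin.castLE hle (0 : Fin (l+1)) = 0 := by ext; simp
          rw [this, Fin.cons_zero]; exact hv
        | succ i =>
          have : Fin.castLE hle i.succ = (Fin.castLE hlk i).succ := by ext; simp
          rw [this, Fin.cons_succ]
          exact hf _ (by simpa using i.2)
      set t : Fin (l+1) → W := fun j => ⟨(Fin.cons v f : Fin (k+1) → V) (Fin.castLE hle j), hmem j⟩ with ht
      have hti : LinearIndependent ℝ t := by
        apply LinearIndependent.of_comp W.subtype
        exact hind.comp _ (Fin.castLE_injective hle)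
      have hcard := hti.fintype_card_le_finrank
      simp [hWl] at hcard
    · -- TypeIOrth ⊆ W
      intro hv
      by_contra hvW
      have hv0 : v ≠ 0 := fun h => hvW (h ▸ W.zero_mem)
      exact not_mem_typeIOrth hdim ω hω W hlk hv0
        (fun h => absurd h hvW) (fun _ => hWl.ge) hv
  · intro l' hl' hl'l
    ext v
    simp only [Set.mem_singleton_iff]
    constructor
    · intro hv
      by_contra hv0
      exact not_mem_typeIOrth hdim ω hω W (by omega) hv0
        (fun _ => by omega) (fun _ => by omega) hv
    · rintro rfl f hf
      apply ω.map_linearDependent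
      intro hind
      exact hind.ne_zero 0 (Fin.cons_zero _ _)
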